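/- arXiv:1407.6892 — 6 statements merged into one kernel-verified Lean document; each statement's English description precedes it below -/
import Mathlib

section
/- The group of units of the inverse monoid IO∞(ℤ) is isomorphic to the additive group of integers ℤ; concretely, α ∈ IO∞(ℤ) is invertible (i.e., α∘α⁻¹ = α⁻¹∘α = id_ℤ) if and only if α is a total monotone bijection of ℤ, and every such bijection is a translation x ↦ x + m for some m ∈ ℤ. -/
/-- A partial injective self-map of ℤ (encoded as a `PEquiv`) is monotone. -/
def PMono (f : ℤ ≃. ℤ) : Prop :=
  ∀ x y a b : ℤ, a ∈ f x → b ∈ f y → x ≤ y → a ≤ b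

/-- Domain of a partial injective self-map of ℤ. -/
def PDom (f : ℤ ≃. ℤ) : Set ℤ := {x | (f x).isSome}

/-- Range of a partial injective self-map of ℤ. -/
def PRan (f : ℤ ≃. ℤ) : Set ℤ := {y | (f.symm y).isSome}

/-- Membership in IO∞(ℤ): injective (built into `PEquiv`), monotone,
with cofinite domain and cofinite range. -/
def IOZ (f : ℤ ≃. ℤ) : Prop :=
  PMono f ∧ (PDom f)ᶜ.Finite ∧ (PRan f)ᶜ.Finite

lemma smono_surj (f : ℤ → ℤ) (hf : StrictMono f) (hs : Function.Surjective f) :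
    ∀ x, f x = x + f 0 := by
  have step : ∀ x, f (x + 1) = f x + 1 := by
    intro x
    have h1 : f x + 1 ≤ f (x + 1) := Int.add_one_le_iff.2 (hf (by omega))
    rcases hs (f x + 1) with ⟨z, hz⟩
    have hzx : x < z := hf.lt_iff_lt.1 (by omega)
    have : f (x + 1) ≤ f z := hf.le_iff_le.2 (by omega)
    omega
  intro x
  induction x using Int.induction_on with
  | zero => simp
  | succ n ih => have := step n; omega
  | pred n ih => have := step (-n - 1); simp at this ⊢; omega

/-- α ∈ IO∞(ℤ) is a unit iff it is a translation x ↦ x + m; hence the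
group of units of IO∞(ℤ) is (isomorphic to) the additive group ℤ. -/
theorem stmt5 (α : ℤ ≃. ℤ) (hα : IOZ α) :
    (∃ β : ℤ ≃. ℤ, IOZ β ∧ α.trans β = PEquiv.refl ℤ ∧ β.trans α = PEquiv.refl ℤ) ↔
      ∃ m : ℤ, ∀ x : ℤ, α x = some (x + m) := by
  constructor
  · rintro ⟨β, hβ, hαβ, hβα⟩
    have ht : ∀ x : ℤ, ∃ y, α x = some y := by
      intro x
      have := congrArg (fun g : ℤ ≃. ℤ => g x) hαβ
      simp only [PEquiv.trans, PEquiv.refl] at this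
      rcases Option.bind_eq_some_iff.1 this with ⟨y, hy, _⟩
      exact ⟨y, hy⟩
    choose f hf using ht
    have hsurj : Function.Surjective f := by
      intro y
      have := congrArg (fun g : ℤ ≃. ℤ => g y) hβα
      simp only [PEquiv.trans, PEquiv.refl] at this
      rcases Option.bind_eq_some_iff.1 this with ⟨z, _, hz2⟩
      exact ⟨z, by rw [hf z] at hz2; exact (Option.some_inj.1 hz2)⟩
    have hinj : Function.Injective f := by
      intro x y hxy
      have h1 : α.symm (f x) = some x := (α.eq_some_iff).2 (hf x)
      have h2 : α.symm (f y) = some y := (α.eq_some_iff).2 (hf y)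
      rw [hxy, h2] at h1
      exact (Option.some_inj.1 h1).symm
    have hmono : Monotone f := fun x y hxy =>
      hα.1 x y (f x) (f y) (hf x) (hf y) hxy
    have hsm : StrictMono f := hmono.strictMono_of_injective hinj
    refine ⟨f 0, fun x => ?_⟩
    rw [hf x, smono_surj f hsm hsurj x]
  · rintro ⟨m, h⟩
    have hsymm : ∀ y : ℤ, α.symm y = some (y - m) := by
      intro y
      rw [α.eq_some_iff, h]
      congr 1
      omega
    refine ⟨α.symm, ⟨?_, ?_, ?_⟩, ?_, ?_⟩
    · intro x y a b ha hb hxy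
      simp only [Option.mem_def, hsymm, Option.some_inj] at ha hb
      omega
    · have : (PDom α.symm)ᶜ = ∅ := by
        ext y
        simp [PDom, hsymm y]
      rw [this]; exact Set.finite_empty
    · have : (PRan α.symm)ᶜ = ∅ := by
        ext x
        simp [PRan, PEquiv.symm_symm, h x]
      rw [this]; exact Set.finite_empty
    · apply PEquiv.ext; intro x
      show (α x).bind α.symm = some x
      rw [h x, Option.bind_some, hsymm]
      congr 1
      omega
    · apply PEquiv.ext; intro x
      show (α.symm x).bind α = some x
      rw [hsymm x, Option.bind_some, h]
      congr 1
      omega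
end

section
/- The inverse monoid IO∞(ℤ) is bisimple: for any α, β ∈ IO∞(ℤ) there exist γ, δ ∈ IO∞(ℤ) such that γ∘α∘δ ℋ β; equivalently, any two elements are 𝒟-equivalent. -/
/-- Principal right ideal αS¹ in IO∞(ℤ). -/
def rIdeal (α : ℤ ≃. ℤ) : Set (ℤ ≃. ℤ) := {γ | ∃ s, IOZ s ∧ γ = α.trans s}

/-- Principal left ideal S¹α in IO∞(ℤ). -/
def lIdeal (α : ℤ ≃. ℤ) : Set (ℤ ≃. ℤ) := {γ | ∃ s, IOZ s ∧ γ = s.trans α}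

attribute [local instance] Classical.propDecidable

noncomputable section
namespace IOZaux


variable (S : Set ℤ) (hS : Sᶜ.Finite)

/-- number of "holes" of `S` below `x`. -/
def cnt (x : ℤ) : ℤ := ((hS.toFinset.filter (· < x)).card : ℤ)

/-- the canonical order isomorphism from `S` onto `ℤ`. -/
def g (x : ℤ) : ℤ := x - cnt S hS x

lemma cnt_diff {x y : ℤ} (h : x ≤ y) :
    cnt S hS y = cnt S hS x + ((hS.toFinset.filter (fun z => x ≤ z ∧ z < y)).card : ℤ) := by
  have hsplit : hS.toFinset.filter (· < y)
      = hS.toFinset.filter (· < x) ∪ hS.toFinset.filter (fun z => x ≤ z ∧ z < y) := by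
    ext z
    simp only [Finset.mem_union, Finset.mem_filter]
    constructor
    · rintro ⟨hz, hzy⟩
      by_cases hzx : z < x
      · exact Or.inl ⟨hz, hzx⟩
      · exact Or.inr ⟨hz, le_of_not_gt hzx, hzy⟩
    · rintro (⟨hz, hzx⟩ | ⟨hz, _, hzy⟩)
      · exact ⟨hz, lt_of_lt_of_le hzx h⟩
      · exact ⟨hz, hzy⟩
  have hdisj : Disjoint (hS.toFinset.filter (· < x))
      (hS.toFinset.filter (fun z => x ≤ z ∧ z < y)) := by
    rw [Finset.disjoint_left]
    intro z hz1 hz2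
    simp only [Finset.mem_filter] at hz1 hz2
    omega
  rw [cnt, cnt, hsplit, Finset.card_union_of_disjoint hdisj]
  push_cast; ring

lemma filter_card_le {x y : ℤ} (h : x ≤ y) :
    ((hS.toFinset.filter (fun z => x ≤ z ∧ z < y)).card : ℤ) ≤ y - x := by
  have hsub : hS.toFinset.filter (fun z => x ≤ z ∧ z < y) ⊆ Finset.Ico x y := by
    intro z hz
    simp only [Finset.mem_filter] at hz
    exact Finset.mem_Ico.2 ⟨hz.2.1, hz.2.2⟩
  have := Finset.card_le_card hsub
  have hc := Int.card_Ico x y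
  omega

lemma g_mono {x y : ℤ} (h : x ≤ y) : g S hS x ≤ g S hS y := by
  have h1 := cnt_diff S hS h
  have h2 := filter_card_le S hS h
  unfold g; omega

lemma g_lt {x y : ℤ} (hx : x ∈ S) (h : x < y) : g S hS x < g S hS y := by
  have h1 := cnt_diff S hS h.le
  have hsub : hS.toFinset.filter (fun z => x ≤ z ∧ z < y) ⊆ Finset.Ico (x + 1) y := by
    intro z hz
    simp only [Finset.mem_filter, Set.Finite.mem_toFinset, Set.mem_compl_iff] at hz
    refine Finset.mem_Ico.2 ⟨?_, hz.2.2⟩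
    rcases eq_or_lt_of_le hz.2.1 with rfl | hlt
    · exact absurd hx hz.1
    · omega
  have h2 := Finset.card_le_card hsub
  have hc := Int.card_Ico (x + 1) y
  unfold g; omega

lemma g_inj {x y : ℤ} (hx : x ∈ S) (hy : y ∈ S) (h : g S hS x = g S hS y) : x = y := by
  rcases lt_trichotomy x y with hlt | heq | hgt
  · exact absurd h (ne_of_lt (g_lt S hS hx hlt))
  · exact heq
  · exact absurd h.symm (ne_of_lt (g_lt S hS hy hgt))

lemma g_step {x y : ℤ} (hx : x ∈ S) (hxy : x < y)
    (hbetween : ∀ z, x < z → z < y → z ∉ S) :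
    g S hS y = g S hS x + 1 := by
  have h1 := cnt_diff S hS hxy.le
  have heq : hS.toFinset.filter (fun z => x ≤ z ∧ z < y) = Finset.Ico (x + 1) y := by
    ext z
    simp only [Finset.mem_filter, Set.Finite.mem_toFinset, Set.mem_compl_iff, Finset.mem_Ico]
    constructor
    · rintro ⟨hz, hzx, hzy⟩
      rcases eq_or_lt_of_le hzx with rfl | hlt
      · exact absurd hx hz
      · omega
    · rintro ⟨hz1, hz2⟩
      exact ⟨hbetween z (by omega) hz2, by omega, hz2⟩
  rw [heq, Int.card_Ico] at h1
  unfold g; omega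

lemma g_surj (n : ℤ) : ∃ x, x ∈ S ∧ g S hS x = n := by
  obtain ⟨L, hL⟩ := hS.bddBelow
  obtain ⟨U, hU⟩ := hS.bddAbove
  have hx₀S : min n (L - 1) ∈ S := by
    by_contra h
    have := hL (Set.mem_compl h)
    omega
  have hcnt0 : cnt S hS (min n (L - 1)) = 0 := by
    have : hS.toFinset.filter (· < min n (L - 1)) = ∅ := by
      ext z
      simp only [Finset.mem_filter, Set.Finite.mem_toFinset, Finset.notMem_empty, iff_false,
        not_and]
      intro hz
      have := hL hz
      omega
    rw [cnt, this]
    simp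
  have key : ∀ x : ℤ, x - (hS.toFinset.card : ℤ) ≤ g S hS x := by
    intro x
    have := Finset.card_filter_le hS.toFinset (· < x)
    unfold g cnt; omega
  obtain ⟨w, ⟨hwS, hwle⟩, hmax⟩ := Int.exists_greatest_of_bdd
    (P := fun x => x ∈ S ∧ g S hS x ≤ n)
    ⟨n + (hS.toFinset.card : ℤ), fun z hz => by have := key z; omega⟩
    ⟨min n (L - 1), hx₀S, by unfold g; omega⟩
  by_cases hn : g S hS w = n
  · exact ⟨w, hwS, hn⟩
  have hinh : ∃ y, w < y ∧ y ∈ S := by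
    refine ⟨max (w + 1) (U + 1), by omega, ?_⟩
    by_contra h
    have := hU (Set.mem_compl h)
    omega
  obtain ⟨y, ⟨hy1, hy2⟩, hleast⟩ := Int.exists_least_of_bdd
    (P := fun y => w < y ∧ y ∈ S) ⟨w + 1, fun z hz => by omega⟩ hinh
  have hstep := g_step S hS hwS hy1
    (fun z hz1 hz2 hzS => absurd (hleast z ⟨hz1, hzS⟩) (by omega))
  have hgyn : g S hS y ≤ n := by omega
  have := hmax y ⟨hy2, hgyn⟩
  omega

/-- inverse of `g`. -/
def ginv (n : ℤ) : ℤ := (g_surj S hS n).choose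

lemma ginv_mem (n : ℤ) : ginv S hS n ∈ S := (g_surj S hS n).choose_spec.1

lemma g_ginv (n : ℤ) : g S hS (ginv S hS n) = n := (g_surj S hS n).choose_spec.2

lemma ginv_g {b : ℤ} (hb : b ∈ S) : ginv S hS (g S hS b) = b :=
  g_inj S hS (ginv_mem S hS _) hb (g_ginv S hS _)




lemma mkIso_helper (S T : Set ℤ) (hS : Sᶜ.Finite) (hT : Tᶜ.Finite) (a b : ℤ)
    (h : (if b ∈ T then some (ginv S hS (g T hT b)) else none) = some a) :
    (if a ∈ S then some (ginv T hT (g S hS a)) else none) = some b := by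
  split_ifs at h with hb
  · rw [Option.some_inj] at h
    subst h
    rw [if_pos (ginv_mem S hS _), Option.some_inj, g_ginv, ginv_g T hT hb]

/-- The canonical partial order isomorphism from `S` onto `T`. -/
def mkIso (S T : Set ℤ) (hS : Sᶜ.Finite) (hT : Tᶜ.Finite) : ℤ ≃. ℤ where
  toFun x := if x ∈ S then some (ginv T hT (g S hS x)) else none
  invFun y := if y ∈ T then some (ginv S hS (g T hT y)) else none
  inv a b := ⟨mkIso_helper S T hS hT a b, mkIso_helper T S hT hS b a⟩

lemma mkIso_apply (S T : Set ℤ) (hS : Sᶜ.Finite) (hT : Tᶜ.Finite) (x : ℤ) :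
    mkIso S T hS hT x = if x ∈ S then some (ginv T hT (g S hS x)) else none := rfl

lemma mkIso_symm_apply (S T : Set ℤ) (hS : Sᶜ.Finite) (hT : Tᶜ.Finite) (y : ℤ) :
    (mkIso S T hS hT).symm y = if y ∈ T then some (ginv S hS (g T hT y)) else none := rfl

lemma PDom_mkIso (S T : Set ℤ) (hS : Sᶜ.Finite) (hT : Tᶜ.Finite) :
    PDom (mkIso S T hS hT) = S := by
  ext x
  simp only [PDom, Set.mem_setOf_eq, mkIso_apply]
  split_ifs with hx <;> simp [hx]

lemma PRan_mkIso (S T : Set ℤ) (hS : Sᶜ.Finite) (hT : Tᶜ.Finite) :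
    PRan (mkIso S T hS hT) = T := by
  ext y
  simp only [PRan, Set.mem_setOf_eq, mkIso_symm_apply]
  split_ifs with hy <;> simp [hy]

lemma PMono_mkIso (S T : Set ℤ) (hS : Sᶜ.Finite) (hT : Tᶜ.Finite) :
    PMono (mkIso S T hS hT) := by
  intro x y a b ha hb hxy
  rw [Option.mem_def, mkIso_apply] at ha hb
  split_ifs at ha hb with hx hy
  rw [Option.some_inj] at ha hb
  subst ha; subst hb
  by_contra hab
  push_neg at hab
  have h1 : g T hT (ginv T hT (g S hS y)) < g T hT (ginv T hT (g S hS x)) :=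
    g_lt T hT (ginv_mem T hT _) hab
  rw [g_ginv, g_ginv] at h1
  exact absurd (g_mono S hS hxy) (by omega)

lemma IOZ_mkIso (S T : Set ℤ) (hS : Sᶜ.Finite) (hT : Tᶜ.Finite) :
    IOZ (mkIso S T hS hT) :=
  ⟨PMono_mkIso S T hS hT, by rw [PDom_mkIso]; exact hS, by rw [PRan_mkIso]; exact hT⟩

-- general IOZ lemmas

lemma PRan_eq_PDom_symm (f : ℤ ≃. ℤ) : PRan f = PDom f.symm := rfl

lemma PDom_eq_PRan_symm (f : ℤ ≃. ℤ) : PDom f = PRan f.symm := rfl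

lemma PMono_symm {f : ℤ ≃. ℤ} (hf : PMono f) : PMono f.symm := by
  intro x y a b ha hb hxy
  rw [f.mem_iff_mem] at ha hb
  by_contra hab
  push_neg at hab
  have hyx := hf b a y x hb ha hab.le
  have hxy' : x = y := le_antisymm hxy hyx
  subst hxy'
  have h1 := f.eq_some_iff.2 (Option.mem_def.1 ha)
  have h2 := f.eq_some_iff.2 (Option.mem_def.1 hb)
  rw [h1, Option.some_inj] at h2
  omega

lemma IOZ_symm {f : ℤ ≃. ℤ} (hf : IOZ f) : IOZ f.symm :=
  ⟨PMono_symm hf.1, by rw [← PRan_eq_PDom_symm]; exact hf.2.2,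
   by rw [← PDom_eq_PRan_symm]; exact hf.2.1⟩

lemma trans_apply' (f g : ℤ ≃. ℤ) (x : ℤ) : (f.trans g) x = (f x).bind g := rfl

lemma PDom_trans_cofinite {f g : ℤ ≃. ℤ} (hf : (PDom f)ᶜ.Finite) (hg : (PDom g)ᶜ.Finite) :
    (PDom (f.trans g))ᶜ.Finite := by
  have hsub : (PDom (f.trans g))ᶜ ⊆ (PDom f)ᶜ ∪ ⋃ m ∈ (PDom g)ᶜ, {x | f x = some m} := by
    intro x hx
    simp only [PDom, Set.mem_compl_iff, Set.mem_setOf_eq] at hx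
    rcases hfx : f x with _ | m
    · left
      simp [PDom, hfx]
    · right
      refine Set.mem_biUnion ?_ hfx
      intro hm
      simp only [PDom, Set.mem_setOf_eq] at hm
      apply hx
      rw [trans_apply', hfx]
      exact hm
  refine Set.Finite.subset (hf.union (Set.Finite.biUnion hg ?_)) hsub
  intro m _
  apply Set.Subsingleton.finite
  intro a ha b hb
  simp only [Set.mem_setOf_eq] at ha hb
  have h1 := f.eq_some_iff.2 ha
  have h2 := f.eq_some_iff.2 hb
  rw [h1, Option.some_inj] at h2
  omega

lemma PMono_trans {f g : ℤ ≃. ℤ} (hf : PMono f) (hg : PMono g) : PMono (f.trans g) := by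
  intro x y a b ha hb hxy
  rw [f.mem_trans] at ha hb
  obtain ⟨m, hm1, hm2⟩ := ha
  obtain ⟨k, hk1, hk2⟩ := hb
  exact hg m k a b hm2 hk2 (hf x y m k hm1 hk1 hxy)

lemma IOZ_trans {f g : ℤ ≃. ℤ} (hf : IOZ f) (hg : IOZ g) : IOZ (f.trans g) := by
  refine ⟨PMono_trans hf.1 hg.1, PDom_trans_cofinite hf.2.1 hg.2.1, ?_⟩
  rw [PRan_eq_PDom_symm, PEquiv.symm_trans_rev]
  exact PDom_trans_cofinite (by rw [← PRan_eq_PDom_symm]; exact hg.2.2)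
    (by rw [← PRan_eq_PDom_symm]; exact hf.2.2)

end IOZaux
end


open IOZaux in
/-- IO∞(ℤ) is bisimple: for all α, β there are γ, δ with γ∘α∘δ ℋ β. -/
theorem stmt8 (α β : ℤ ≃. ℤ) (hα : IOZ α) (hβ : IOZ β) :
    ∃ γ δ : ℤ ≃. ℤ, IOZ γ ∧ IOZ δ ∧
      rIdeal ((γ.trans α).trans δ) = rIdeal β ∧
      lIdeal ((γ.trans α).trans δ) = lIdeal β := by
  obtain ⟨hβm, hβd, hβr⟩ := hβ
  obtain ⟨hαm, hαd, hαr⟩ := hα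
  set γ := mkIso (PDom β) (PDom α) hβd hαd with hγdef
  have hγ : IOZ γ := IOZ_mkIso _ _ _ _
  set τ := γ.trans α with hτdef
  have hτ : IOZ τ := IOZ_trans hγ ⟨hαm, hαd, hαr⟩
  set δ := τ.symm.trans β with hδdef
  have hδ : IOZ δ := IOZ_trans (IOZ_symm hτ) ⟨hβm, hβd, hβr⟩
  have key : τ.trans δ = β := by
    apply PEquiv.ext
    intro x
    by_cases hx : x ∈ PDom β
    · have hγx : γ x = some (ginv (PDom α) hαd (g (PDom β) hβd x)) := by
        rw [hγdef, mkIso_apply, if_pos hx]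
      set a := ginv (PDom α) hαd (g (PDom β) hβd x) with ha
      have haA : (α a).isSome := ginv_mem (PDom α) hαd _
      obtain ⟨b, hb⟩ := Option.isSome_iff_exists.mp haA
      have hτx : τ x = some b := by
        rw [hτdef, trans_apply', hγx]
        simpa using hb
      have hsymm : τ.symm b = some x := τ.eq_some_iff.2 hτx
      calc (τ.trans δ) x = (τ x).bind δ := rfl
        _ = δ b := by rw [hτx]; rfl
        _ = (τ.symm b).bind β := rfl
        _ = β x := by rw [hsymm]; rfl
    · have hγx : γ x = none := by rw [hγdef, mkIso_apply, if_neg hx]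
      have h1 : (τ.trans δ) x = none := by
        rw [trans_apply', hτdef, trans_apply', hγx]
        rfl
      have h2 : β x = none := Option.not_isSome_iff_eq_none.1 hx
      rw [h1, h2]
  have key2 : (γ.trans α).trans δ = β := key
  exact ⟨γ, δ, hγ, hδ, by rw [key2], by rw [key2]⟩
end

section
/- For any α ∈ IO∞(ℤ) there exist γ, δ ∈ IO∞(ℤ) such that γ∘α∘δ is the identity map of ℤ. -/
def gmap (N : ℕ) : ℤ ≃. ℤ where
  toFun x := some (if 0 ≤ x then x + (N + 1) else x - (N + 1))
  invFun y := if (N : ℤ) + 1 ≤ y then some (y - (N + 1))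
    else if y ≤ -((N : ℤ) + 2) then some (y + (N + 1)) else none
  inv x y := by
    split_ifs <;> simp_all <;> omega

/-- for any α ∈ IO∞(ℤ) there exist γ, δ ∈ IO∞(ℤ) with γ∘α∘δ = id. -/
theorem stmt9 (α : ℤ ≃. ℤ) (hα : IOZ α) :
    ∃ γ δ : ℤ ≃. ℤ, IOZ γ ∧ IOZ δ ∧ (γ.trans α).trans δ = PEquiv.refl ℤ := by
  obtain ⟨hm, hd, hr⟩ := hα
  obtain ⟨N, hN⟩ : ∃ N : ℕ, ∀ z : ℤ, z ∈ (PDom α)ᶜ → |z| ≤ N := by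
    obtain ⟨M, hM⟩ := (hd.image (fun z => |z|)).bddAbove
    exact ⟨M.toNat, fun z hz => le_trans (hM ⟨z, hz, rfl⟩) (Int.self_le_toNat M)⟩
  set γ := gmap N with hγdef
  have hγ : ∀ x : ℤ, γ x = some (if 0 ≤ x then x + (N + 1) else x - (N + 1)) := fun _ => rfl
  set g : ℤ → ℤ := fun x => if 0 ≤ x then x + (N + 1) else x - (N + 1) with hg
  have hgdom : ∀ x, g x ∈ PDom α := by
    intro x
    by_contra h
    have := hN _ h
    simp only [hg] at this
    rw [abs_le] at this
    split_ifs at this <;> omega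
  set β := γ.trans α with hβdef
  have hβ : ∀ x : ℤ, β x = α (g x) := fun _ => rfl
  have hβtot : ∀ x : ℤ, ∃ z, β x = some z := by
    intro x
    have := hgdom x
    simp only [PDom, Set.mem_setOf_eq, Option.isSome_iff_exists] at this
    obtain ⟨z, hz⟩ := this
    exact ⟨z, by rw [hβ, hz]⟩
  -- monotonicity of β
  have hβmono : PMono β := by
    intro x y a b ha hb hxy
    rw [Option.mem_def, hβ] at ha hb
    refine hm (g x) (g y) a b ha hb ?_
    simp only [hg]; split_ifs <;> omega
  -- IOZ γ
  have hγIOZ : IOZ γ := by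
    refine ⟨?_, ?_, ?_⟩
    · intro x y a b ha hb hxy
      rw [Option.mem_def, hγ] at ha hb
      simp only [Option.some_inj] at ha hb
      subst ha; subst hb
      split_ifs <;> omega
    · have : (PDom γ)ᶜ = ∅ := by
        ext x; simp [PDom, hγ]
      rw [this]; exact Set.finite_empty
    · apply Set.Finite.subset (Set.finite_Icc (-((N : ℤ) + 1)) N)
      intro y hy
      simp only [PRan, Set.mem_compl_iff, Set.mem_setOf_eq, Option.isSome_iff_exists] at hy
      push_neg at hy
      have h2 : γ.symm y = if (N : ℤ) + 1 ≤ y then some (y - (N + 1))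
          else if y ≤ -((N : ℤ) + 2) then some (y + (N + 1)) else none := rfl
      rw [h2] at hy
      split_ifs at hy with h3 h4
      · exact absurd rfl (hy _)
      · exact absurd rfl (hy _)
      · constructor <;> omega
  refine ⟨γ, β.symm, hγIOZ, ⟨?_, ?_, ?_⟩, ?_⟩
  · -- PMono β.symm
    intro x y a b ha hb hxy
    rw [Option.mem_def, PEquiv.eq_some_iff] at ha hb
    by_contra hab
    push_neg at hab
    have : y ≤ x := hβmono b a y x hb ha (le_of_lt hab)
    have hxey : x = y := le_antisymm hxy this
    subst hxey
    have h1 : β.symm x = some a := (PEquiv.eq_some_iff β).mpr ha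
    have h2 : β.symm x = some b := (PEquiv.eq_some_iff β).mpr hb
    rw [h1] at h2
    simp at h2
    omega
  · -- (PDom β.symm)ᶜ finite = (PRan β)ᶜ finite
    have hsub : (PDom β.symm)ᶜ ⊆ (PRan α)ᶜ ∪ ((fun w => (α w).getD 0) '' (PRan γ)ᶜ) := by
      intro z hz
      simp only [PDom, Set.mem_compl_iff, Set.mem_setOf_eq, Option.isSome_iff_exists] at hz
      push_neg at hz
      by_cases hz2 : z ∈ PRan α
      · right
        simp only [PRan, Set.mem_setOf_eq, Option.isSome_iff_exists] at hz2
        obtain ⟨w, hw⟩ := hz2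
        have hαw : α w = some z := PEquiv.eq_some_iff α |>.mp hw
        refine ⟨w, ?_, by simp [hαw]⟩
        simp only [PRan, Set.mem_compl_iff, Set.mem_setOf_eq, Option.isSome_iff_exists]
        push_neg
        intro x hx
        have hγx : γ x = some w := PEquiv.eq_some_iff γ |>.mp hx
        have : β x = some z := by rw [hβdef]; show (γ x).bind α = some z; rw [hγx]; exact hαw
        exact hz x ((PEquiv.eq_some_iff β).mpr this)
      · left; exact hz2
    exact Set.Finite.subset (hr.union ((hγIOZ.2.2).image _)) hsub
  · -- (PRan β.symm)ᶜ finite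
    have : (PRan β.symm)ᶜ = ∅ := by
      ext x
      simp only [PRan, PEquiv.symm_symm, Set.mem_compl_iff, Set.mem_setOf_eq,
        Option.isSome_iff_exists, Set.mem_empty_iff_false, iff_false]
      exact not_not_intro (hβtot x)
    rw [this]; exact Set.finite_empty
  · -- β.trans β.symm = refl
    apply PEquiv.ext
    intro x
    obtain ⟨z, hz⟩ := hβtot x
    show (β x).bind β.symm = some x
    rw [hz, Option.bind_some]
    exact (PEquiv.eq_some_iff β).mpr hz
end

section
/- Let σ be the least group congruence on IO∞(ℤ), defined by α σ β iff α∘ε = β∘ε for some idempotent ε. Then the quotient IO∞(ℤ)/σ is isomorphic to the additive group ℤ × ℤ. -/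
/-- Idempotent element of IO∞(ℤ). -/
def IsIdem (ε : ℤ ≃. ℤ) : Prop := ε.trans ε = ε

/-- The least group congruence σ on IO∞(ℤ). -/
def sigmaZ (α β : ℤ ≃. ℤ) : Prop := ∃ ε : ℤ ≃. ℤ, IOZ ε ∧ IsIdem ε ∧ α.trans ε = β.trans ε

namespace Stmt11Aux

lemma trans_apply (f g : ℤ ≃. ℤ) (a : ℤ) : (f.trans g) a = (f a).bind g := rfl

def evPos (f : ℤ ≃. ℤ) (c : ℤ) : Prop := ∃ N : ℤ, ∀ x : ℤ, N ≤ x → f x = some (x + c)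
def evNeg (f : ℤ ≃. ℤ) (c : ℤ) : Prop := ∃ N : ℤ, ∀ x : ℤ, x ≤ N → f x = some (x + c)

lemma evPos_unique {f : ℤ ≃. ℤ} {c c' : ℤ} (h : evPos f c) (h' : evPos f c') : c = c' := by
  obtain ⟨N, hN⟩ := h; obtain ⟨N', hN'⟩ := h'
  have h1 := hN (max N N') (le_max_left _ _)
  have h2 := hN' (max N N') (le_max_right _ _)
  rw [h1] at h2; injection h2 with h2; omega

lemma evNeg_unique {f : ℤ ≃. ℤ} {c c' : ℤ} (h : evNeg f c) (h' : evNeg f c') : c = c' := by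
  obtain ⟨N, hN⟩ := h; obtain ⟨N', hN'⟩ := h'
  have h1 := hN (min N N') (min_le_left _ _)
  have h2 := hN' (min N N') (min_le_right _ _)
  rw [h1] at h2; injection h2 with h2; omega

lemma inj_of {f : ℤ ≃. ℤ} {x y a : ℤ} (hx : f x = some a) (hy : f y = some a) : x = y := by
  have h1 := f.eq_some_iff.mpr hx
  have h2 := f.eq_some_iff.mpr hy
  rw [h1] at h2; injection h2

lemma exists_evPos {f : ℤ ≃. ℤ} (hf : IOZ f) : ∃ c, evPos f c := by
  obtain ⟨hmono, hdom, hran⟩ := hf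
  obtain ⟨A, hA⟩ := hdom.bddAbove
  obtain ⟨B, hB⟩ := hran.bddAbove
  have hdomN : ∀ x : ℤ, A + 1 ≤ x → ∃ y, f x = some y := by
    intro x hx
    by_contra h
    push_neg at h
    have hx' : x ∈ (PDom f)ᶜ := by
      simp only [Set.mem_compl_iff, PDom, Set.mem_setOf_eq, Option.isSome_iff_exists]
      rintro ⟨y, hy⟩; exact h y hy
    have := hA hx'; omega
  have hranN : ∀ y : ℤ, B + 1 ≤ y → ∃ x, f x = some y := by
    intro y hy
    by_contra h
    push_neg at h
    have hy' : y ∈ (PRan f)ᶜ := by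
      simp only [Set.mem_compl_iff, PRan, Set.mem_setOf_eq, Option.isSome_iff_exists]
      rintro ⟨x, hx⟩
      exact h x (f.eq_some_iff.mp hx)
    have := hB hy'; omega
  have hstep : ∀ x a : ℤ, A + 1 ≤ x → B + 1 ≤ a + 1 → f x = some a → f (x + 1) = some (a + 1) := by
    intro x a hx ha hfa
    obtain ⟨b, hb⟩ := hdomN (x + 1) (by omega)
    have h1 : a ≤ b := hmono x (x + 1) a b hfa hb (by omega)
    have h2 : a ≠ b := by
      intro h; subst h; have := inj_of hfa hb; omega
    have h3 : ¬ (a + 2 ≤ b) := by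
      intro hab
      obtain ⟨z, hz⟩ := hranN (a + 1) ha
      rcases le_or_gt z x with hzx | hzx
      · have := hmono z x (a + 1) a hz hfa hzx; omega
      · have := hmono (x + 1) z b (a + 1) hb hz (by omega); omega
    have : b = a + 1 := by omega
    rw [hb, this]
  obtain ⟨a0, ha0⟩ := hdomN (A + 1) le_rfl
  have hgrow : ∀ k : ℕ, ∃ b : ℤ, f (A + 1 + k) = some b ∧ a0 + k ≤ b := by
    intro k
    induction k with
    | zero => exact ⟨a0, by simpa using ha0, by simp⟩
    | succ n ih =>
      obtain ⟨b, hb, hab⟩ := ih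
      obtain ⟨b', hb'⟩ := hdomN (A + 1 + (n + 1 : ℕ)) (by push_cast; omega)
      have hb'' : f (A + 1 + n + 1) = some b' := by
        convert hb' using 2; push_cast; ring
      have h1 : b ≤ b' := hmono _ _ _ _ hb hb'' (by omega)
      have h2 : b ≠ b' := by
        intro h; subst h; have := inj_of hb hb''; omega
      exact ⟨b', hb', by push_cast; omega⟩
  obtain ⟨aK, hK, haK⟩ := hgrow (B + 1 - a0).toNat
  set K : ℤ := A + 1 + (B + 1 - a0).toNat with hKdef
  have haKB : B + 1 ≤ aK := by
    rcases le_or_gt a0 (B+1) with h | h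
    · have := Int.toNat_of_nonneg (by omega : (0:ℤ) ≤ B + 1 - a0); omega
    · have : ((B + 1 - a0).toNat : ℤ) = 0 := by
        simp [Int.toNat_of_nonpos (by omega : B + 1 - a0 ≤ 0)]
      omega
  refine ⟨aK - K, K, ?_⟩
  have hind : ∀ k : ℕ, f (K + k) = some (K + k + (aK - K)) := by
    intro k
    induction k with
    | zero => simpa using hK
    | succ n ih =>
      have := hstep (K + n) (K + n + (aK - K))
        (by have h0 : (0:ℤ) ≤ ((B + 1 - a0).toNat : ℤ) := Int.natCast_nonneg _; omega)
        (by omega) ih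
      convert this using 2 <;> push_cast <;> ring
  intro x hx
  have := hind (x - K).toNat
  have ht : ((x - K).toNat : ℤ) = x - K := Int.toNat_of_nonneg (by omega)
  rw [ht] at this
  convert this using 2 <;> ring

lemma exists_evNeg {f : ℤ ≃. ℤ} (hf : IOZ f) : ∃ c, evNeg f c := by
  obtain ⟨hmono, hdom, hran⟩ := hf
  obtain ⟨A, hA⟩ := hdom.bddBelow
  obtain ⟨B, hB⟩ := hran.bddBelow
  have hdomN : ∀ x : ℤ, x ≤ A - 1 → ∃ y, f x = some y := by
    intro x hx
    by_contra h
    push_neg at h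
    have hx' : x ∈ (PDom f)ᶜ := by
      simp only [Set.mem_compl_iff, PDom, Set.mem_setOf_eq, Option.isSome_iff_exists]
      rintro ⟨y, hy⟩; exact h y hy
    have := hA hx'; omega
  have hranN : ∀ y : ℤ, y ≤ B - 1 → ∃ x, f x = some y := by
    intro y hy
    by_contra h
    push_neg at h
    have hy' : y ∈ (PRan f)ᶜ := by
      simp only [Set.mem_compl_iff, PRan, Set.mem_setOf_eq, Option.isSome_iff_exists]
      rintro ⟨x, hx⟩
      exact h x (f.eq_some_iff.mp hx)
    have := hB hy'; omega
  have hstep : ∀ x a : ℤ, x ≤ A - 1 → a - 1 ≤ B - 1 → f x = some a → f (x - 1) = some (a - 1) := by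
    intro x a hx ha hfa
    obtain ⟨b, hb⟩ := hdomN (x - 1) (by omega)
    have h1 : b ≤ a := hmono (x - 1) x b a hb hfa (by omega)
    have h2 : b ≠ a := by
      intro h; subst h; have := inj_of hfa hb; omega
    have h3 : ¬ (b ≤ a - 2) := by
      intro hab
      obtain ⟨z, hz⟩ := hranN (a - 1) ha
      rcases le_or_gt x z with hzx | hzx
      · have := hmono x z a (a - 1) hfa hz hzx; omega
      · have := hmono z (x - 1) (a - 1) b hz hb (by omega); omega
    have : b = a - 1 := by omega
    rw [hb, this]
  obtain ⟨a0, ha0⟩ := hdomN (A - 1) le_rfl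
  have hgrow : ∀ k : ℕ, ∃ b : ℤ, f (A - 1 - k) = some b ∧ b ≤ a0 - k := by
    intro k
    induction k with
    | zero => exact ⟨a0, by simpa using ha0, by simp⟩
    | succ n ih =>
      obtain ⟨b, hb, hab⟩ := ih
      obtain ⟨b', hb'⟩ := hdomN (A - 1 - (n + 1 : ℕ)) (by push_cast; omega)
      have hb'' : f (A - 1 - n - 1) = some b' := by
        convert hb' using 2; push_cast; ring
      have h1 : b' ≤ b := hmono _ _ _ _ hb'' hb (by omega)
      have h2 : b ≠ b' := by
        intro h; subst h; have := inj_of hb hb''; omega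
      exact ⟨b', hb', by push_cast; omega⟩
  obtain ⟨aK, hK, haK⟩ := hgrow (a0 - (B - 1)).toNat
  set K : ℤ := A - 1 - (a0 - (B - 1)).toNat with hKdef
  have haKB : aK ≤ B - 1 := by
    rcases le_or_gt (B - 1) a0 with h | h
    · have := Int.toNat_of_nonneg (by omega : (0:ℤ) ≤ a0 - (B - 1)); omega
    · have : ((a0 - (B - 1)).toNat : ℤ) = 0 := by
        simp [Int.toNat_of_nonpos (by omega : a0 - (B - 1) ≤ 0)]
      omega
  refine ⟨aK - K, K, ?_⟩
  have hind : ∀ k : ℕ, f (K - k) = some (K - k + (aK - K)) := by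
    intro k
    induction k with
    | zero => simpa using hK
    | succ n ih =>
      have := hstep (K - n) (K - n + (aK - K))
        (by have h0 : (0:ℤ) ≤ ((a0 - (B - 1)).toNat : ℤ) := Int.natCast_nonneg _; omega)
        (by omega) ih
      convert this using 2 <;> push_cast <;> ring
  intro x hx
  have := hind (K - x).toNat
  have ht : ((K - x).toNat : ℤ) = K - x := Int.toNat_of_nonneg (by omega)
  rw [ht] at this
  convert this using 2 <;> ring

open Classical in
noncomputable def phi (f : ℤ ≃. ℤ) : ℤ × ℤ :=
  (if h : ∃ c, evNeg f c then h.choose else 0, if h : ∃ c, evPos f c then h.choose else 0)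

lemma phi_fst {f : ℤ ≃. ℤ} {c : ℤ} (h : evNeg f c) : (phi f).1 = c := by
  have he : ∃ c, evNeg f c := ⟨c, h⟩
  simp only [phi, he, dif_pos]
  exact evNeg_unique he.choose_spec h

lemma phi_snd {f : ℤ ≃. ℤ} {c : ℤ} (h : evPos f c) : (phi f).2 = c := by
  have he : ∃ c, evPos f c := ⟨c, h⟩
  simp only [phi, he, dif_pos]
  exact evPos_unique he.choose_spec h

lemma evPos_trans {f g : ℤ ≃. ℤ} {c d : ℤ} (hf : evPos f c) (hg : evPos g d) :
    evPos (f.trans g) (c + d) := by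
  obtain ⟨N, hN⟩ := hf; obtain ⟨M, hM⟩ := hg
  refine ⟨max N (M - c), fun x hx => ?_⟩
  rw [trans_apply, hN x (le_trans (le_max_left _ _) hx), Option.bind_some,
    hM (x + c) (by have := le_trans (le_max_right _ _) hx; omega)]
  congr 1; ring

lemma evNeg_trans {f g : ℤ ≃. ℤ} {c d : ℤ} (hf : evNeg f c) (hg : evNeg g d) :
    evNeg (f.trans g) (c + d) := by
  obtain ⟨N, hN⟩ := hf; obtain ⟨M, hM⟩ := hg
  refine ⟨min N (M - c), fun x hx => ?_⟩
  rw [trans_apply, hN x (le_trans hx (min_le_left _ _)), Option.bind_some,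
    hM (x + c) (by have := le_trans hx (min_le_right _ _); omega)]
  congr 1; ring

/-- the "jump" map with shift d at -∞ and c at +∞ -/
def jump (d c : ℤ) : ℤ ≃. ℤ where
  toFun x := if x ≤ -1 then some (x + d) else if max 0 (d - c) ≤ x then some (x + c) else none
  invFun y := if y ≤ d - 1 then some (y - d) else if c + max 0 (d - c) ≤ y then some (y - c) else none
  inv a b := by
    have hm0 : (0:ℤ) ≤ max 0 (d - c) := le_max_left _ _
    have hm1 : d - c ≤ max 0 (d - c) := le_max_right _ _
    split_ifs <;> simp_all <;> omega

lemma jump_apply (d c x : ℤ) : jump d c x =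
    if x ≤ -1 then some (x + d) else if max 0 (d - c) ≤ x then some (x + c) else none := rfl

lemma jump_symm_apply (d c y : ℤ) : (jump d c).symm y =
    if y ≤ d - 1 then some (y - d) else if c + max 0 (d - c) ≤ y then some (y - c) else none := rfl

lemma jump_IOZ (d c : ℤ) : IOZ (jump d c) := by
  have hm0 : (0:ℤ) ≤ max 0 (d - c) := le_max_left _ _
  have hm1 : d - c ≤ max 0 (d - c) := le_max_right _ _
  refine ⟨?_, ?_, ?_⟩
  · intro x y a b ha hb hxy
    simp only [Option.mem_def, jump_apply] at ha hb
    generalize hgen : max 0 (d - c) = m at hm0 hm1 ha hb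
    split_ifs at ha hb <;> simp_all <;> omega
  · apply Set.Finite.subset (Set.finite_Ioo (-1 : ℤ) (max 0 (d - c)))
    intro x hx
    simp only [Set.mem_compl_iff, PDom, Set.mem_setOf_eq, jump_apply] at hx
    simp only [Set.mem_Ioo]
    generalize hgen : max 0 (d - c) = m at hm0 hm1 hx ⊢
    split_ifs at hx <;> simp_all <;> omega
  · apply Set.Finite.subset (Set.finite_Ioo (d - 1) (c + max 0 (d - c)))
    intro y hy
    simp only [Set.mem_compl_iff, PRan, Set.mem_setOf_eq, jump_symm_apply] at hy
    simp only [Set.mem_Ioo]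
    generalize hgen : max 0 (d - c) = m at hm0 hm1 hy ⊢
    split_ifs at hy <;> simp_all <;> omega

lemma jump_evNeg (d c : ℤ) : evNeg (jump d c) d :=
  ⟨-1, fun x hx => by rw [jump_apply, if_pos hx]⟩

lemma jump_evPos (d c : ℤ) : evPos (jump d c) c := by
  refine ⟨max 0 (d - c), fun x hx => ?_⟩
  have hm0 : (0:ℤ) ≤ max 0 (d - c) := le_max_left _ _
  rw [jump_apply, if_neg (by omega), if_pos hx]

lemma idem_eq {ε : ℤ ≃. ℤ} (h : IsIdem ε) {x y : ℤ} (hxy : ε x = some y) : x = y := by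
  have h2 : (ε.trans ε) x = ε x := by rw [h]
  rw [trans_apply, hxy, Option.bind_some] at h2
  have h3 := ε.eq_some_iff.mpr h2
  have h4 := ε.eq_some_iff.mpr hxy
  rw [h3] at h4; injection h4 with h4; omega

lemma domAbove {f : ℤ ≃. ℤ} (h : ((PDom f)ᶜ : Set ℤ).Finite) :
    ∃ A : ℤ, ∀ x : ℤ, A ≤ x → ∃ y, f x = some y := by
  obtain ⟨A, hA⟩ := h.bddAbove
  refine ⟨A + 1, fun x hx => ?_⟩
  by_contra hc
  push_neg at hc
  have hx' : x ∈ (PDom f)ᶜ := by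
    simp only [Set.mem_compl_iff, PDom, Set.mem_setOf_eq, Option.isSome_iff_exists]
    rintro ⟨y, hy⟩; exact hc y hy
  have := hA hx'; omega

lemma domBelow {f : ℤ ≃. ℤ} (h : ((PDom f)ᶜ : Set ℤ).Finite) :
    ∃ A : ℤ, ∀ x : ℤ, x ≤ A → ∃ y, f x = some y := by
  obtain ⟨A, hA⟩ := h.bddBelow
  refine ⟨A - 1, fun x hx => ?_⟩
  by_contra hc
  push_neg at hc
  have hx' : x ∈ (PDom f)ᶜ := by
    simp only [Set.mem_compl_iff, PDom, Set.mem_setOf_eq, Option.isSome_iff_exists]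
    rintro ⟨y, hy⟩; exact hc y hy
  have := hA hx'; omega

lemma evPos_trans_idem {α ε : ℤ ≃. ℤ} {c : ℤ} (hα : evPos α c) (hε : IOZ ε)
    (hid : IsIdem ε) : evPos (α.trans ε) c := by
  obtain ⟨N, hN⟩ := hα
  obtain ⟨A, hA⟩ := domAbove hε.2.1
  refine ⟨max N (A - c), fun x hx => ?_⟩
  rw [trans_apply, hN x (le_trans (le_max_left _ _) hx), Option.bind_some]
  obtain ⟨y, hy⟩ := hA (x + c) (by have := le_trans (le_max_right _ _) hx; omega)
  have hxy := idem_eq hid hy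
  rw [hy, ← hxy]

lemma evNeg_trans_idem {α ε : ℤ ≃. ℤ} {c : ℤ} (hα : evNeg α c) (hε : IOZ ε)
    (hid : IsIdem ε) : evNeg (α.trans ε) c := by
  obtain ⟨N, hN⟩ := hα
  obtain ⟨A, hA⟩ := domBelow hε.2.1
  refine ⟨min N (A - c), fun x hx => ?_⟩
  rw [trans_apply, hN x (le_trans hx (min_le_left _ _)), Option.bind_some]
  obtain ⟨y, hy⟩ := hA (x + c) (by have := le_trans hx (min_le_right _ _); omega)
  have hxy := idem_eq hid hy
  rw [hy, ← hxy]

/-- the idempotent supported outside (-M, M) -/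
noncomputable def tail (M : ℤ) : ℤ ≃. ℤ :=
  letI : DecidablePred (· ∈ {y : ℤ | y ≤ -M ∨ M ≤ y}) := fun _ => Classical.dec _
  PEquiv.ofSet {y : ℤ | y ≤ -M ∨ M ≤ y}

lemma tail_apply (M x : ℤ) : tail M x = if x ≤ -M ∨ M ≤ x then some x else none := by
  unfold tail PEquiv.ofSet
  by_cases h : x ≤ -M ∨ M ≤ x
  · rw [if_pos h]
    exact if_pos (show x ∈ {y : ℤ | y ≤ -M ∨ M ≤ y} from h)
  · rw [if_neg h]
    exact if_neg (show x ∉ {y : ℤ | y ≤ -M ∨ M ≤ y} from h)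

lemma tail_symm_apply (M x : ℤ) : (tail M).symm x = if x ≤ -M ∨ M ≤ x then some x else none := by
  unfold tail PEquiv.ofSet
  by_cases h : x ≤ -M ∨ M ≤ x
  · rw [if_pos h]
    exact if_pos (show x ∈ {y : ℤ | y ≤ -M ∨ M ≤ y} from h)
  · rw [if_neg h]
    exact if_neg (show x ∉ {y : ℤ | y ≤ -M ∨ M ≤ y} from h)

lemma tail_IOZ (M : ℤ) : IOZ (tail M) := by
  refine ⟨?_, ?_, ?_⟩
  · intro x y a b ha hb hxy
    simp only [Option.mem_def, tail_apply] at ha hb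
    split_ifs at ha hb
    injection ha with ha; injection hb with hb; omega
  · apply Set.Finite.subset (Set.finite_Ioo (-M : ℤ) M)
    intro x hx
    simp only [Set.mem_compl_iff, PDom, Set.mem_setOf_eq, tail_apply] at hx
    simp only [Set.mem_Ioo]
    split_ifs at hx with h
    · simp at hx
    · omega
  · apply Set.Finite.subset (Set.finite_Ioo (-M : ℤ) M)
    intro x hx
    simp only [Set.mem_compl_iff, PRan, Set.mem_setOf_eq, tail_symm_apply] at hx
    simp only [Set.mem_Ioo]
    split_ifs at hx with h
    · simp at hx
    · omega

lemma tail_idem (M : ℤ) : IsIdem (tail M) := by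
  apply PEquiv.ext
  intro x
  rw [trans_apply, tail_apply]
  split_ifs with h
  · rw [Option.bind_some, tail_apply, if_pos h]
  · rfl

end Stmt11Aux

open Stmt11Aux in
/-- IO∞(ℤ)/σ ≅ ℤ × ℤ: there is a surjective homomorphism onto
ℤ(+) × ℤ(+) whose kernel is exactly σ. -/
theorem stmt11 : ∃ φ : (ℤ ≃. ℤ) → ℤ × ℤ,
    (∀ α β : ℤ ≃. ℤ, IOZ α → IOZ β → φ (α.trans β) = φ α + φ β) ∧
    (∀ p : ℤ × ℤ, ∃ α : ℤ ≃. ℤ, IOZ α ∧ φ α = p) ∧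
    (∀ α β : ℤ ≃. ℤ, IOZ α → IOZ β → (φ α = φ β ↔ sigmaZ α β)) := by
  refine ⟨phi, ?_, ?_, ?_⟩
  · intro α β hα hβ
    obtain ⟨cα, hcα⟩ := exists_evPos hα
    obtain ⟨dα, hdα⟩ := exists_evNeg hα
    obtain ⟨cβ, hcβ⟩ := exists_evPos hβ
    obtain ⟨dβ, hdβ⟩ := exists_evNeg hβ
    have ht : phi (α.trans β) = (dα + dβ, cα + cβ) :=
      Prod.ext (phi_fst (evNeg_trans hdα hdβ)) (phi_snd (evPos_trans hcα hcβ))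
    have ha : phi α = (dα, cα) := Prod.ext (phi_fst hdα) (phi_snd hcα)
    have hb : phi β = (dβ, cβ) := Prod.ext (phi_fst hdβ) (phi_snd hcβ)
    rw [ht, ha, hb, Prod.mk_add_mk]
  · intro p
    refine ⟨jump p.1 p.2, jump_IOZ _ _, ?_⟩
    exact Prod.ext (phi_fst (jump_evNeg p.1 p.2)) (phi_snd (jump_evPos p.1 p.2))
  · intro α β hα hβ
    obtain ⟨c, hc⟩ := exists_evPos hα
    obtain ⟨d, hd⟩ := exists_evNeg hα
    obtain ⟨c', hc'⟩ := exists_evPos hβ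
    obtain ⟨d', hd'⟩ := exists_evNeg hβ
    constructor
    · intro hphi
      obtain rfl : c = c' := by
        have e1 := phi_snd hc
        have e2 := phi_snd hc'
        rw [hphi] at e1; omega
      obtain rfl : d = d' := by
        have e1 := phi_fst hd
        have e2 := phi_fst hd'
        rw [hphi] at e1; omega
      obtain ⟨N1, hN1⟩ := hc
      obtain ⟨N2, hN2⟩ := hc'
      obtain ⟨N3, hN3⟩ := hd
      obtain ⟨N4, hN4⟩ := hd'
      set P : ℤ := max N1 N2 with hP
      set Q : ℤ := min N3 N4 with hQ
      set S : Set ℤ := ((fun x => (α x).getD 0) '' Set.Icc Q P) ∪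
        ((fun x => (β x).getD 0) '' Set.Icc Q P) with hS
      have hSfin : S.Finite :=
        Set.Finite.union (Set.Finite.image _ (Set.finite_Icc _ _))
          (Set.Finite.image _ (Set.finite_Icc _ _))
      obtain ⟨U, hU⟩ := hSfin.bddAbove
      obtain ⟨L, hL⟩ := hSfin.bddBelow
      set M : ℤ := max U (-L) + 1 with hM
      have hMU : U ≤ max U (-L) := le_max_left _ _
      have hML : -L ≤ max U (-L) := le_max_right _ _
      have hmidα : ∀ x : ℤ, Q ≤ x → x ≤ P → (α x).bind (tail M) = none := by
        intro x hxQ hxP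
        cases hgx : α x with
        | none => rfl
        | some y =>
          have hyS : y ∈ S := Set.mem_union_left _ ⟨x, ⟨hxQ, hxP⟩, by simp [hgx]⟩
          have h1 := hU hyS
          have h2 := hL hyS
          rw [Option.bind_some, tail_apply, if_neg (by push_neg; omega)]
      have hmidβ : ∀ x : ℤ, Q ≤ x → x ≤ P → (β x).bind (tail M) = none := by
        intro x hxQ hxP
        cases hgx : β x with
        | none => rfl
        | some y =>
          have hyS : y ∈ S := Set.mem_union_right _ ⟨x, ⟨hxQ, hxP⟩, by simp [hgx]⟩
          have h1 := hU hyS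
          have h2 := hL hyS
          rw [Option.bind_some, tail_apply, if_neg (by push_neg; omega)]
      refine ⟨tail M, tail_IOZ M, tail_idem M, ?_⟩
      apply PEquiv.ext
      intro x
      rw [trans_apply, trans_apply]
      rcases le_or_gt x P with hxP | hxP
      · rcases le_or_gt x Q with hxQ | hxQ
        · rw [hN3 x (le_trans hxQ (min_le_left _ _)), hN4 x (le_trans hxQ (min_le_right _ _))]
        · rw [hmidα x (le_of_lt hxQ) hxP, hmidβ x (le_of_lt hxQ) hxP]
      · rw [hN1 x (by have := le_max_left N1 N2; omega),
          hN2 x (by have := le_max_right N1 N2; omega)]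
    · rintro ⟨ε, hεIOZ, hεid, heq⟩
      have h1 : evPos (α.trans ε) c := evPos_trans_idem hc hεIOZ hεid
      have h2 : evPos (β.trans ε) c' := evPos_trans_idem hc' hεIOZ hεid
      have h3 : evNeg (α.trans ε) d := evNeg_trans_idem hd hεIOZ hεid
      have h4 : evNeg (β.trans ε) d' := evNeg_trans_idem hd' hεIOZ hεid
      rw [heq] at h1 h3
      have hcc : c = c' := evPos_unique h1 h2
      have hdd : d = d' := evNeg_unique h3 h4
      exact Prod.ext (by rw [phi_fst hd, phi_fst hd', hdd]) (by rw [phi_snd hc, phi_snd hc', hcc])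
end

section
/- For each i, the relation σ_[i] on the direct power (IO∞(ℤ))ⁿ defined by α σ_[i] β iff there is an idempotent ε ∈ IO∞(ℤ) with α·εᵢ° = β·εᵢ° (where εᵢ° is the n-tuple with ε in coordinate i and identities elsewhere) is a congruence. -/
/-- Membership in the direct power (IO∞(ℤ))ⁿ. -/
def IOZn (n : ℕ) (α : Fin n → ℤ ≃. ℤ) : Prop := ∀ i, IOZ (α i)

/-- Coordinatewise composition on the direct power (α then β, as in the paper). -/
def mulN {n : ℕ} (α β : Fin n → ℤ ≃. ℤ) : Fin n → ℤ ≃. ℤ := fun i => (α i).trans (β i)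

/-- The identity 𝕀 of (IO∞(ℤ))ⁿ. -/
def oneN (n : ℕ) : Fin n → ℤ ≃. ℤ := fun _ => PEquiv.refl ℤ

/-- εᵢ°: the tuple with ε in coordinate i and identities elsewhere. -/
def epsT {n : ℕ} (i : Fin n) (ε : ℤ ≃. ℤ) : Fin n → ℤ ≃. ℤ :=
  fun j => if j = i then ε else PEquiv.refl ℤ

/-- A congruence on the semigroup (IO∞(ℤ))ⁿ (relative to the carrier `IOZn n`). -/
def IsCongOn (n : ℕ) (ρ : (Fin n → ℤ ≃. ℤ) → (Fin n → ℤ ≃. ℤ) → Prop) : Prop :=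
  (∀ α, IOZn n α → ρ α α) ∧
  (∀ α β, IOZn n α → IOZn n β → ρ α β → ρ β α) ∧
  (∀ α β γ, IOZn n α → IOZn n β → IOZn n γ → ρ α β → ρ β γ → ρ α γ) ∧
  (∀ α β γ, IOZn n α → IOZn n β → IOZn n γ → ρ α β →
    ρ (mulN α γ) (mulN β γ) ∧ ρ (mulN γ α) (mulN γ β))

/-- The congruence σ_[i]. -/
def sigmaI (n : ℕ) (i : Fin n) (α β : Fin n → ℤ ≃. ℤ) : Prop :=
  ∃ ε : ℤ ≃. ℤ, IOZ ε ∧ IsIdem ε ∧ mulN α (epsT i ε) = mulN β (epsT i ε)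

/-- D(α,β): the set of coordinates where α and β differ. -/
def Dset {n : ℕ} (α β : Fin n → ℤ ≃. ℤ) : Set (Fin n) := {i | α i ≠ β i}

/-- Idempotent tuple. -/
def IsIdemN {n : ℕ} (ε : Fin n → ℤ ≃. ℤ) : Prop := ∀ i, (ε i).trans (ε i) = ε i

/-- σ_[i₁,…,i_k] for the set of indices t: α and β agree after right multiplication
by a product ε°_{i₁}⋯ε°_{i_k} of idempotents supported on t. -/
def sigmaSet (n : ℕ) (t : Finset (Fin n)) (α β : Fin n → ℤ ≃. ℤ) : Prop :=
  ∃ ε : Fin n → ℤ ≃. ℤ, IOZn n ε ∧ IsIdemN ε ∧ (∀ i ∉ t, ε i = PEquiv.refl ℤ) ∧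
    mulN α ε = mulN β ε

/-! ### Auxiliary lemmas -/

/-- A partial identity. -/
def PID (f : ℤ ≃. ℤ) : Prop := ∀ x y : ℤ, y ∈ f x → y = x

lemma pid_of_idem {e : ℤ ≃. ℤ} (h : IsIdem e) : PID e := by
  intro x y hy
  have h2 : y ∈ (e.trans e) x := by rw [h]; exact hy
  rw [PEquiv.mem_trans] at h2
  obtain ⟨z, hz, hyz⟩ := h2
  have hzy : z = y := Option.some.inj ((Option.mem_def.1 hz).symm.trans (Option.mem_def.1 hy))
  subst hzy
  exact (PEquiv.inj e hy hyz).symm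

lemma pid_mem_trans {e f : ℤ ≃. ℤ} (he : PID e) (hf : PID f) {x y : ℤ} :
    y ∈ (e.trans f) x ↔ y = x ∧ x ∈ e x ∧ x ∈ f x := by
  rw [PEquiv.mem_trans]
  constructor
  · rintro ⟨z, hz, hyz⟩
    have hzx := he _ _ hz
    subst hzx
    have hyx := hf _ _ hyz
    subst hyx
    exact ⟨rfl, hz, hyz⟩
  · rintro ⟨rfl, h1, h2⟩
    exact ⟨y, h1, h2⟩

lemma idem_of_pid {e : ℤ ≃. ℤ} (h : PID e) : IsIdem e := by
  apply PEquiv.ext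
  intro x
  apply Option.ext
  intro y
  show y ∈ (_ : Option ℤ) ↔ y ∈ (_ : Option ℤ)
  rw [pid_mem_trans h h]
  constructor
  · rintro ⟨rfl, h1, _⟩; exact h1
  · intro hy
    have := h _ _ hy
    subst this
    exact ⟨rfl, hy, hy⟩

lemma pid_comm {e f : ℤ ≃. ℤ} (he : PID e) (hf : PID f) : e.trans f = f.trans e := by
  apply PEquiv.ext
  intro x
  apply Option.ext
  intro y
  show y ∈ (_ : Option ℤ) ↔ y ∈ (_ : Option ℤ)
  rw [pid_mem_trans he hf, pid_mem_trans hf he]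
  tauto

lemma pid_trans {e f : ℤ ≃. ℤ} (he : PID e) (hf : PID f) : PID (e.trans f) := by
  intro x y hy
  exact ((pid_mem_trans he hf).1 hy).1

lemma pid_self_symm (f : ℤ ≃. ℤ) : PID (f.trans f.symm) := by
  intro x y hy
  rw [PEquiv.mem_trans] at hy
  obtain ⟨z, hz, hyz⟩ := hy
  rw [PEquiv.mem_iff_mem] at hyz
  exact (PEquiv.inj f hz hyz).symm

lemma trans_symm_trans (f : ℤ ≃. ℤ) : (f.trans f.symm).trans f = f := by
  apply PEquiv.ext
  intro x
  apply Option.ext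
  intro y
  show y ∈ (_ : Option ℤ) ↔ y ∈ (_ : Option ℤ)
  rw [PEquiv.mem_trans]
  constructor
  · rintro ⟨z, hz, hyz⟩
    have := pid_self_symm f _ _ hz
    subst this
    exact hyz
  · intro hy
    refine ⟨x, ?_, hy⟩
    rw [PEquiv.mem_trans]
    exact ⟨y, hy, PEquiv.mem_iff_mem f |>.2 hy⟩

lemma pid_mono {e : ℤ ≃. ℤ} (h : PID e) : PMono e := by
  intro x y a b ha hb hxy
  have := h _ _ ha; subst this
  have := h _ _ hb; subst this
  exact hxy

lemma pid_apply_of_mem {e : ℤ ≃. ℤ} (h : PID e) {x : ℤ} (hx : x ∈ PDom e) :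
    e x = some x := by
  obtain ⟨a, ha⟩ := Option.isSome_iff_exists.1 hx
  have := h _ _ (Option.mem_def.2 ha)
  subst this
  exact ha

lemma pid_ran_eq_dom {e : ℤ ≃. ℤ} (h : PID e) : PRan e = PDom e := by
  ext y
  simp only [PRan, PDom, Set.mem_setOf_eq, Option.isSome_iff_exists]
  constructor
  · rintro ⟨a, ha⟩
    rw [PEquiv.eq_some_iff] at ha
    have := h _ _ (Option.mem_def.2 ha)
    rw [this]
    exact ⟨y, ha⟩
  · rintro ⟨a, ha⟩
    have := h _ _ (Option.mem_def.2 ha)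
    rw [this] at ha
    exact ⟨y, (PEquiv.eq_some_iff e).2 ha⟩

lemma dom_trans_pid {e f : ℤ ≃. ℤ} (he : PID e) (hf : PID f) :
    PDom e ∩ PDom f ⊆ PDom (e.trans f) := by
  rintro x ⟨h1, h2⟩
  have he1 := pid_apply_of_mem he h1
  have hf1 := pid_apply_of_mem hf h2
  show ((e.trans f) x).isSome
  rw [Option.isSome_iff_exists]
  exact ⟨x, (PEquiv.trans_eq_some e f x x).2 ⟨x, he1, hf1⟩⟩

lemma ioz_trans_idem {e f : ℤ ≃. ℤ} (hi : IsIdem e) (hj : IsIdem f)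
    (he : IOZ e) (hf : IOZ f) : IOZ (e.trans f) := by
  have pe := pid_of_idem hi
  have pf := pid_of_idem hj
  have pef := pid_trans pe pf
  refine ⟨pid_mono pef, ?_, ?_⟩
  · apply Set.Finite.subset (he.2.1.union hf.2.1)
    intro x hx
    by_contra hc
    simp only [Set.mem_union, Set.mem_compl_iff, not_or, not_not] at hc
    exact hx (dom_trans_pid pe pf ⟨hc.1, hc.2⟩)
  · rw [pid_ran_eq_dom pef]
    apply Set.Finite.subset (he.2.1.union hf.2.1)
    intro x hx
    by_contra hc
    simp only [Set.mem_union, Set.mem_compl_iff, not_or, not_not] at hc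
    exact hx (dom_trans_pid pe pf ⟨hc.1, hc.2⟩)

lemma ioz_refl : IOZ (PEquiv.refl ℤ) := by
  refine ⟨?_, ?_, ?_⟩
  · intro x y a b ha hb hxy
    simp only [PEquiv.refl_apply, Option.mem_def, Option.some.injEq] at ha hb
    subst ha; subst hb; exact hxy
  · have : (PDom (PEquiv.refl ℤ))ᶜ = ∅ := by
      ext x; simp [PDom, PEquiv.refl_apply]
    rw [this]; exact Set.finite_empty
  · have : (PRan (PEquiv.refl ℤ))ᶜ = ∅ := by
      ext x; simp [PRan, PEquiv.symm_refl, PEquiv.refl_apply]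
    rw [this]; exact Set.finite_empty

lemma isidem_refl : IsIdem (PEquiv.refl ℤ) := PEquiv.trans_refl _

/-- the conjugated idempotent used for right compatibility. -/
lemma pid_conj {g e : ℤ ≃. ℤ} (he : PID e) : PID ((g.symm.trans e).trans g) := by
  intro x y hy
  rw [PEquiv.mem_trans] at hy
  obtain ⟨w, hw, hyw⟩ := hy
  rw [PEquiv.mem_trans] at hw
  obtain ⟨z, hz, hwz⟩ := hw
  have := he _ _ hwz
  subst this
  rw [PEquiv.mem_iff_mem] at hz
  exact Option.mem_unique hyw hz

lemma dom_conj_cofinite {g e : ℤ ≃. ℤ} (he : PID e) (hg : IOZ g) (hdom : (PDom e)ᶜ.Finite) :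
    (PDom ((g.symm.trans e).trans g))ᶜ.Finite := by
  apply Set.Finite.subset (hg.2.2.union (hdom.image (fun z => (g z).getD 0)))
  intro x hx
  by_contra hc
  simp only [Set.mem_union, Set.mem_compl_iff, not_or, not_not] at hc
  obtain ⟨hran, himg⟩ := hc
  obtain ⟨z, hz⟩ := Option.isSome_iff_exists.1 hran
  have hgz : g z = some x := (PEquiv.eq_some_iff g).1 hz
  have hze : z ∈ PDom e := by
    by_contra hze
    exact himg ⟨z, hze, by show (g z).getD 0 = x; rw [hgz]; rfl⟩
  have hez : e z = some z := pid_apply_of_mem he hze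
  apply hx
  show (((g.symm.trans e).trans g) x).isSome
  rw [Option.isSome_iff_exists]
  refine ⟨x, (PEquiv.trans_eq_some _ _ _ _).2 ⟨z, ?_, hgz⟩⟩
  exact (PEquiv.trans_eq_some _ _ _ _).2 ⟨z, hz, hez⟩

lemma ioz_conj {g e : ℤ ≃. ℤ} (hi : IsIdem e) (he : IOZ e) (hg : IOZ g) :
    IOZ ((g.symm.trans e).trans g) := by
  have p := pid_conj (g := g) (pid_of_idem hi)
  exact ⟨pid_mono p, dom_conj_cofinite (pid_of_idem hi) hg he.2.1,
    by rw [pid_ran_eq_dom p]; exact dom_conj_cofinite (pid_of_idem hi) hg he.2.1⟩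

lemma conj_key {g e : ℤ ≃. ℤ} (hi : IsIdem e) :
    g.trans ((g.symm.trans e).trans g) = e.trans g := by
  have h1 : g.trans ((g.symm.trans e).trans g) = ((g.trans g.symm).trans e).trans g := by
    rw [← PEquiv.trans_assoc, ← PEquiv.trans_assoc]
  rw [h1, pid_comm (pid_self_symm g) (pid_of_idem hi), PEquiv.trans_assoc,
    trans_symm_trans]

lemma sigma_coords {n : ℕ} {i : Fin n} {α β : Fin n → ℤ ≃. ℤ} {e : ℤ ≃. ℤ}
    (h : mulN α (epsT i e) = mulN β (epsT i e)) :
    (∀ j, j ≠ i → α j = β j) ∧ (α i).trans e = (β i).trans e := by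
  constructor
  · intro j hj
    have := congrFun h j
    simp only [mulN, epsT, if_neg hj, PEquiv.trans_refl] at this
    exact this
  · have := congrFun h i
    simp only [mulN, epsT, if_pos rfl] at this
    exact this

lemma sigma_build {n : ℕ} {i : Fin n} {α β : Fin n → ℤ ≃. ℤ} {e : ℤ ≃. ℤ}
    (h1 : ∀ j, j ≠ i → α j = β j) (h2 : (α i).trans e = (β i).trans e) :
    mulN α (epsT i e) = mulN β (epsT i e) := by
  funext j
  by_cases hj : j = i
  · subst hj
    simp only [mulN, epsT, if_pos rfl]
    exact h2
  · simp only [mulN, epsT, if_neg hj, PEquiv.trans_refl]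
    exact h1 j hj

/-- σ_[i] is a congruence on (IO∞(ℤ))ⁿ. -/
theorem stmt12 (n : ℕ) (i : Fin n) : IsCongOn n (sigmaI n i) := by
  refine ⟨?_, ?_, ?_, ?_⟩
  · -- reflexivity
    intro α _
    exact ⟨PEquiv.refl ℤ, ioz_refl, isidem_refl, rfl⟩
  · -- symmetry
    rintro α β _ _ ⟨e, he, hi, heq⟩
    exact ⟨e, he, hi, heq.symm⟩
  · -- transitivity
    rintro α β γ _ _ _ ⟨e, he, hie, heq⟩ ⟨f, hf, hif, hfq⟩
    refine ⟨e.trans f, ioz_trans_idem hie hif he hf,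
      idem_of_pid (pid_trans (pid_of_idem hie) (pid_of_idem hif)), ?_⟩
    obtain ⟨hc1, hk1⟩ := sigma_coords heq
    obtain ⟨hc2, hk2⟩ := sigma_coords hfq
    apply sigma_build
    · intro j hj; rw [hc1 j hj, hc2 j hj]
    · calc (α i).trans (e.trans f) = ((α i).trans e).trans f := by
            rw [PEquiv.trans_assoc]
        _ = ((β i).trans e).trans f := by rw [hk1]
        _ = (β i).trans (f.trans e) := by
            rw [PEquiv.trans_assoc, pid_comm (pid_of_idem hie) (pid_of_idem hif)]
        _ = ((β i).trans f).trans e := by rw [PEquiv.trans_assoc]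
        _ = ((γ i).trans f).trans e := by rw [hk2]
        _ = (γ i).trans (e.trans f) := by
            rw [PEquiv.trans_assoc, pid_comm (pid_of_idem hif) (pid_of_idem hie)]
  · -- compatibility
    rintro α β γ _ _ hγ ⟨e, he, hie, heq⟩
    obtain ⟨hc, hk⟩ := sigma_coords heq
    constructor
    · -- right multiplication: use conjugated idempotent
      set g := γ i with hg
      set d := (g.symm.trans e).trans g with hd
      refine ⟨d, ioz_conj hie he (hγ i), idem_of_pid (pid_conj (pid_of_idem hie)), ?_⟩
      apply sigma_build
      · intro j hj
        simp only [mulN]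
        rw [hc j hj]
      · show ((mulN α γ) i).trans d = ((mulN β γ) i).trans d
        simp only [mulN]
        calc ((α i).trans g).trans d = (α i).trans (g.trans d) := by
              rw [PEquiv.trans_assoc]
          _ = (α i).trans (e.trans g) := by rw [hd, conj_key hie]
          _ = ((α i).trans e).trans g := by rw [PEquiv.trans_assoc]
          _ = ((β i).trans e).trans g := by rw [hk]
          _ = (β i).trans (e.trans g) := by rw [PEquiv.trans_assoc]
          _ = (β i).trans (g.trans d) := by rw [hd, conj_key hie]
          _ = ((β i).trans g).trans d := by rw [PEquiv.trans_assoc]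
    · -- left multiplication: same idempotent works
      refine ⟨e, he, hie, ?_⟩
      apply sigma_build
      · intro j hj
        simp only [mulN]
        rw [hc j hj]
      · show ((mulN γ α) i).trans e = ((mulN γ β) i).trans e
        simp only [mulN]
        rw [PEquiv.trans_assoc, PEquiv.trans_assoc, hk]
end

section
/- In the direct power S = (IO∞(ℤ))ⁿ, if 𝔠 is a congruence and α, β are distinct 𝔠-equivalent elements, then there exists ϖ ∈ S with ϖ 𝔠-equivalent to the identity 𝕀 of S and with the set of coordinates where ϖ differs from 𝕀 equal to the set of coordinates where α differs from β. -/
namespace Stmt13Aux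

lemma trans_apply' (f g : ℤ ≃. ℤ) (x : ℤ) : (f.trans g) x = (f x).bind g := rfl

/-- A total monotone injective map whose range avoids `[m,M] \ {a₀}`. -/
def skip (m M a₀ : ℤ) (h1 : m ≤ a₀) (h2 : a₀ ≤ M) : ℤ ≃. ℤ where
  toFun x := some (if x < m then x else if x = m then a₀ else x + (M - m))
  invFun y := if y = a₀ then some m else if y < m then some y
    else if M < y then some (y - (M - m)) else none
  inv a b := by
    simp only [Option.mem_def, Option.some.injEq]
    split_ifs <;> first | omega | (constructor <;> intro h <;> omega) |
      (simp only [reduceCtorEq, false_iff, iff_false, Option.some.injEq] <;> omega)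

lemma skip_apply (m M a₀ : ℤ) (h1 : m ≤ a₀) (h2 : a₀ ≤ M) (x : ℤ) :
    skip m M a₀ h1 h2 x = some (if x < m then x else if x = m then a₀ else x + (M - m)) := rfl

lemma skip_symm_apply (m M a₀ : ℤ) (h1 : m ≤ a₀) (h2 : a₀ ≤ M) (y : ℤ) :
    (skip m M a₀ h1 h2).symm y = (if y = a₀ then some m else if y < m then some y
      else if M < y then some (y - (M - m)) else none) := rfl

lemma skip_total (m M a₀ : ℤ) (h1 : m ≤ a₀) (h2 : a₀ ≤ M) (x : ℤ) :
    (skip m M a₀ h1 h2 x).isSome := by rw [skip_apply]; rfl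

lemma skip_m (m M a₀ : ℤ) (h1 : m ≤ a₀) (h2 : a₀ ≤ M) :
    skip m M a₀ h1 h2 m = some a₀ := by rw [skip_apply]; simp

lemma skip_symm_none (m M a₀ : ℤ) (h1 : m ≤ a₀) (h2 : a₀ ≤ M) (y : ℤ)
    (hy1 : m ≤ y) (hy2 : y ≤ M) (hy3 : y ≠ a₀) : (skip m M a₀ h1 h2).symm y = none := by
  rw [skip_symm_apply]; split_ifs <;> first | rfl | (exfalso; omega)

lemma pmono_skip (m M a₀ : ℤ) (h1 : m ≤ a₀) (h2 : a₀ ≤ M) : PMono (skip m M a₀ h1 h2) := by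
  intro x y a b ha hb hxy
  simp only [skip_apply, Option.mem_def, Option.some.injEq] at ha hb
  split_ifs at ha hb <;> omega

lemma IOZ_skip (m M a₀ : ℤ) (h1 : m ≤ a₀) (h2 : a₀ ≤ M) : IOZ (skip m M a₀ h1 h2) := by
  refine ⟨pmono_skip m M a₀ h1 h2, ?_, ?_⟩
  · have : (PDom (skip m M a₀ h1 h2))ᶜ = ∅ := by
      ext x; simp [PDom, skip_total]
    rw [this]; exact Set.finite_empty
  · refine Set.Finite.subset (Set.finite_Icc m M) ?_
    intro y hy
    simp only [Set.mem_compl_iff, PRan, Set.mem_setOf_eq, skip_symm_apply] at hy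
    split_ifs at hy <;> simp_all <;> constructor <;> omega

lemma IOZ_refl : IOZ (PEquiv.refl ℤ) := by
  refine ⟨fun x y a b ha hb hxy => ?_, ?_, ?_⟩
  · simp only [PEquiv.refl_apply, Option.mem_def, Option.some.injEq] at ha hb; omega
  · have : (PDom (PEquiv.refl ℤ))ᶜ = ∅ := by ext x; simp [PDom]
    rw [this]; exact Set.finite_empty
  · have : (PRan (PEquiv.refl ℤ))ᶜ = ∅ := by ext x; simp [PRan]
    rw [this]; exact Set.finite_empty

lemma pmono_symm (f : ℤ ≃. ℤ) (hf : PMono f) : PMono f.symm := by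
  intro x y a b ha hb hxy
  rw [PEquiv.mem_iff_mem] at ha hb
  by_contra hab
  push_neg at hab
  have h1 : y ≤ x := hf b a y x hb ha (le_of_lt hab)
  have h2 : x = y := le_antisymm hxy h1
  subst h2
  exact absurd (PEquiv.inj f hb ha) (ne_of_lt hab)

lemma IOZ_symm (f : ℤ ≃. ℤ) (hf : IOZ f) : IOZ f.symm :=
  ⟨pmono_symm f hf.1, hf.2.2, hf.2.1⟩

lemma pmono_trans (f g : ℤ ≃. ℤ) (hf : PMono f) (hg : PMono g) : PMono (f.trans g) := by
  intro x y a b ha hb hxy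
  rw [PEquiv.mem_trans] at ha hb
  obtain ⟨c, hc1, hc2⟩ := ha
  obtain ⟨d, hd1, hd2⟩ := hb
  exact hg c d a b hc2 hd2 (hf x y c d hc1 hd1 hxy)

lemma pdom_trans_cofinite (f g : ℤ ≃. ℤ) (hf : (PDom f)ᶜ.Finite) (hg : (PDom g)ᶜ.Finite) :
    (PDom (f.trans g))ᶜ.Finite := by
  have hsub : (PDom (f.trans g))ᶜ ⊆ (PDom f)ᶜ ∪ ⋃ y ∈ (PDom g)ᶜ, {x | f x = some y} := by
    intro x hx
    simp only [Set.mem_compl_iff, PDom, Set.mem_setOf_eq] at hx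
    rcases hfx : f x with _ | y
    · left; simp [PDom, hfx]
    · right
      have hgy : (f.trans g) x = g y := by rw [trans_apply', hfx, Option.bind_some]
      refine Set.mem_biUnion ?_ hfx
      simp only [Set.mem_compl_iff, PDom, Set.mem_setOf_eq]
      rw [hgy] at hx
      exact hx
  refine Set.Finite.subset (hf.union (Set.Finite.biUnion hg ?_)) hsub
  intro y _
  apply Set.Subsingleton.finite
  intro a ha b hb
  exact PEquiv.inj f (Option.mem_def.mpr ha) (Option.mem_def.mpr hb)

lemma IOZ_trans (f g : ℤ ≃. ℤ) (hf : IOZ f) (hg : IOZ g) : IOZ (f.trans g) := by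
  refine ⟨pmono_trans f g hf.1 hg.1, pdom_trans_cofinite f g hf.2.1 hg.2.1, ?_⟩
  have : PRan (f.trans g) = PDom ((f.trans g).symm) := rfl
  rw [this, PEquiv.symm_trans_rev]
  exact pdom_trans_cofinite g.symm f.symm hg.2.2 hf.2.2

/-- `f` is a restriction of `g`. -/
def Sub (f g : ℤ ≃. ℤ) : Prop := ∀ x y : ℤ, y ∈ f x → y ∈ g x

lemma sub_refl (f : ℤ ≃. ℤ) : Sub f f := fun _ _ h => h

lemma sub_antisymm {f g : ℤ ≃. ℤ} (h1 : Sub f g) (h2 : Sub g f) : f = g := by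
  apply PEquiv.ext
  intro x
  rcases hfx : f x with _ | y
  · rcases hgx : g x with _ | z
    · rfl
    · have := h2 x z (Option.mem_def.mpr hgx)
      rw [Option.mem_def, hfx] at this
      exact absurd this (by simp)
  · have := h1 x y (Option.mem_def.mpr hfx)
    rw [Option.mem_def] at this
    rw [this]

lemma conj_refl (α β u : ℤ ≃. ℤ) (hsub : Sub α β)
    (htot : ∀ x, (u x).isSome)
    (hran : ∀ r x, u x = some r → (α r).isSome) :
    (u.trans (β.trans α.symm)).trans u.symm = PEquiv.refl ℤ := by
  apply PEquiv.ext
  intro x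
  obtain ⟨r, hr⟩ := Option.isSome_iff_exists.mp (htot x)
  obtain ⟨w, hw⟩ := Option.isSome_iff_exists.mp (hran r x hr)
  have hβr : β r = some w := Option.mem_def.mp (hsub r w (Option.mem_def.mpr hw))
  have hαs : α.symm w = some r := α.eq_some_iff.mpr hw
  have hus : u.symm r = some x := u.eq_some_iff.mpr hr
  rw [PEquiv.refl_apply, trans_apply', trans_apply', hr, Option.bind_some,
    trans_apply', hβr, Option.bind_some, hαs, Option.bind_some, hus]

/-- The key per-coordinate construction. -/
lemma coord (α β : ℤ ≃. ℤ) (hα : IOZ α) :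
    ∃ u : ℤ ≃. ℤ, IOZ u ∧
      (u.trans (α.trans α.symm)).trans u.symm = PEquiv.refl ℤ ∧
      (Sub α β → (u.trans (β.trans α.symm)).trans u.symm = PEquiv.refl ℤ) ∧
      (¬ Sub α β → ∃ x₀, ((u.trans (β.trans α.symm)).trans u.symm) x₀ = none) := by
  classical
  obtain ⟨G, hGfin, hGdom, a₀, ha₀, hwit⟩ :
      ∃ G : Set ℤ, G.Finite ∧ (PDom α)ᶜ ⊆ G ∧ ∃ a₀ ∉ G,
        (¬ Sub α β → ∃ y₀, α a₀ = some y₀ ∧ β a₀ ≠ some y₀ ∧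
          ∀ c a₁, β a₀ = some c → α.symm c = some a₁ → a₁ ∈ G) := by
    by_cases hs : Sub α β
    · obtain ⟨a₀, ha₀⟩ := hα.2.1.infinite_compl.nonempty
      exact ⟨(PDom α)ᶜ, hα.2.1, subset_rfl, a₀, ha₀, fun h => absurd hs h⟩
    · have hs' := hs
      simp only [Sub, not_forall] at hs'
      obtain ⟨a₀, y₀, hy₀, hny⟩ := hs'
      have hy₀' : α a₀ = some y₀ := Option.mem_def.mp hy₀
      have hny' : β a₀ ≠ some y₀ := fun h => hny (Option.mem_def.mpr h)
      refine ⟨(PDom α)ᶜ ∪ {a | ∃ c, β a₀ = some c ∧ α.symm c = some a}, ?_, Set.subset_union_left,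
        a₀, ?_, ?_⟩
      · refine Set.Finite.union hα.2.1 (Set.Subsingleton.finite ?_)
        rintro a ⟨c, hc, hac⟩ b ⟨c', hc', hbc⟩
        rw [hc] at hc'
        cases hc'
        rw [hac] at hbc
        cases hbc
        rfl
      · rintro (h | ⟨c, hc, hac⟩)
        · simp only [Set.mem_compl_iff, PDom, Set.mem_setOf_eq, hy₀'] at h
          exact h rfl
        · have : α a₀ = some c := α.eq_some_iff.mp hac
          rw [hy₀'] at this
          cases this
          exact hny' hc
      · intro _
        exact ⟨y₀, hy₀', hny', fun c a₁ hc hac => Or.inr ⟨c, hc, hac⟩⟩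
  obtain ⟨m, hm'⟩ := Set.Finite.bddBelow (hGfin.insert a₀)
  obtain ⟨M, hM'⟩ := Set.Finite.bddAbove (hGfin.insert a₀)
  have hm : ∀ c ∈ insert a₀ G, m ≤ c := fun c hc => hm' hc
  have hM : ∀ c ∈ insert a₀ G, c ≤ M := fun c hc => hM' hc
  have h1 : m ≤ a₀ := hm a₀ (Set.mem_insert _ _)
  have h2 : a₀ ≤ M := hM a₀ (Set.mem_insert _ _)
  set u := skip m M a₀ h1 h2 with hu_def
  have husymm_none : ∀ y ∈ G, u.symm y = none := fun y hy =>
    skip_symm_none m M a₀ h1 h2 y (hm y (Set.mem_insert_of_mem _ hy))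
      (hM y (Set.mem_insert_of_mem _ hy)) (fun he => ha₀ (he ▸ hy))
  have htot : ∀ x, (u x).isSome := skip_total m M a₀ h1 h2
  have hran : ∀ r x, u x = some r → (α r).isSome := by
    intro r x hux
    by_contra hnone
    have hrG : r ∈ G := hGdom (by simpa [PDom] using hnone)
    have hx : u.symm r = some x := u.eq_some_iff.mpr hux
    rw [husymm_none r hrG] at hx
    exact absurd hx (by simp)
  refine ⟨u, IOZ_skip m M a₀ h1 h2, conj_refl α α u (sub_refl α) htot hran,
    fun hs => conj_refl α β u hs htot hran, ?_⟩
  intro hns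
  obtain ⟨y₀, hy₀, hny, hG1⟩ := hwit hns
  refine ⟨m, ?_⟩
  have hum : u m = some a₀ := skip_m m M a₀ h1 h2
  rcases hc : β a₀ with _ | c
  · rw [trans_apply', trans_apply', hum, Option.bind_some, trans_apply', hc,
      Option.bind_none, Option.bind_none]
  · rcases hac : α.symm c with _ | a₁
    · rw [trans_apply', trans_apply', hum, Option.bind_some, trans_apply', hc,
        Option.bind_some, hac, Option.bind_none]
    · have ha₁G : a₁ ∈ G := hG1 c a₁ hc hac
      rw [trans_apply', trans_apply', hum, Option.bind_some, trans_apply', hc,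
        Option.bind_some, hac, Option.bind_some, husymm_none a₁ ha₁G]

end Stmt13Aux

/-- from distinct 𝔠-equivalent α, β one gets ϖ with 𝕀 𝔠 ϖ and
D(𝕀,ϖ) = D(α,β). -/
theorem stmt13 (n : ℕ) (ρ : (Fin n → ℤ ≃. ℤ) → (Fin n → ℤ ≃. ℤ) → Prop)
    (hρ : IsCongOn n ρ) (α β : Fin n → ℤ ≃. ℤ) (hα : IOZn n α) (hβ : IOZn n β)
    (hab : ρ α β) (hne : α ≠ β) :
    ∃ ϖ : Fin n → ℤ ≃. ℤ, IOZn n ϖ ∧ ρ (oneN n) ϖ ∧ Dset (oneN n) ϖ = Dset α β := by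
  classical
  obtain ⟨hrefl, hsym, htrans, hclos⟩ := hρ
  choose u hu hA hB hC using fun i => Stmt13Aux.coord (α i) (β i) (hα i)
  choose v hv hA' hB' hC' using fun i => Stmt13Aux.coord (β i) (α i) (hβ i)
  have hmul : ∀ a b : Fin n → ℤ ≃. ℤ, IOZn n a → IOZn n b → IOZn n (mulN a b) :=
    fun a b ha hb i => Stmt13Aux.IOZ_trans _ _ (ha i) (hb i)
  have hone : IOZn n (oneN n) := fun _ => Stmt13Aux.IOZ_refl
  have hαinv : IOZn n (fun i => (α i).symm) := fun i => Stmt13Aux.IOZ_symm _ (hα i)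
  have hβinv : IOZn n (fun i => (β i).symm) := fun i => Stmt13Aux.IOZ_symm _ (hβ i)
  have huinv : IOZn n (fun i => (u i).symm) := fun i => Stmt13Aux.IOZ_symm _ (hu i)
  have hvinv : IOZn n (fun i => (v i).symm) := fun i => Stmt13Aux.IOZ_symm _ (hv i)
  -- the two auxiliary tuples
  set π1 : Fin n → ℤ ≃. ℤ :=
    mulN (mulN u (mulN β (fun i => (α i).symm))) (fun i => (u i).symm) with hπ1_def
  set π2 : Fin n → ℤ ≃. ℤ :=
    mulN (mulN v (mulN α (fun i => (β i).symm))) (fun i => (v i).symm) with hπ2_def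
  have hIπ1 : IOZn n π1 :=
    hmul _ _ (hmul _ _ hu (hmul _ _ hβ hαinv)) huinv
  have hIπ2 : IOZn n π2 :=
    hmul _ _ (hmul _ _ hv (hmul _ _ hα hβinv)) hvinv
  -- ρ (oneN n) π1
  have r1 : ρ (mulN α (fun i => (α i).symm)) (mulN β (fun i => (α i).symm)) :=
    (hclos α β _ hα hβ hαinv hab).1
  have r2 : ρ (mulN u (mulN α (fun i => (α i).symm))) (mulN u (mulN β (fun i => (α i).symm))) :=
    (hclos _ _ u (hmul _ _ hα hαinv) (hmul _ _ hβ hαinv) hu r1).2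
  have r3 : ρ (mulN (mulN u (mulN α (fun i => (α i).symm))) (fun i => (u i).symm)) π1 :=
    (hclos _ _ (fun i => (u i).symm) (hmul _ _ hu (hmul _ _ hα hαinv))
      (hmul _ _ hu (hmul _ _ hβ hαinv)) huinv r2).1
  have e1 : mulN (mulN u (mulN α (fun i => (α i).symm))) (fun i => (u i).symm) = oneN n :=
    funext fun i => hA i
  rw [e1] at r3
  -- ρ (oneN n) π2
  have hba : ρ β α := hsym α β hα hβ hab
  have r1' : ρ (mulN β (fun i => (β i).symm)) (mulN α (fun i => (β i).symm)) :=
    (hclos β α _ hβ hα hβinv hba).1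
  have r2' : ρ (mulN v (mulN β (fun i => (β i).symm))) (mulN v (mulN α (fun i => (β i).symm))) :=
    (hclos _ _ v (hmul _ _ hβ hβinv) (hmul _ _ hα hβinv) hv r1').2
  have r3' : ρ (mulN (mulN v (mulN β (fun i => (β i).symm))) (fun i => (v i).symm)) π2 :=
    (hclos _ _ (fun i => (v i).symm) (hmul _ _ hv (hmul _ _ hβ hβinv))
      (hmul _ _ hv (hmul _ _ hα hβinv)) hvinv r2').1
  have e1' : mulN (mulN v (mulN β (fun i => (β i).symm))) (fun i => (v i).symm) = oneN n :=
    funext fun i => hA' i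
  rw [e1'] at r3'
  -- combine
  refine ⟨mulN π1 π2, hmul _ _ hIπ1 hIπ2, ?_, ?_⟩
  · have r4 : ρ (mulN (oneN n) π2) (mulN π1 π2) :=
      (hclos (oneN n) π1 π2 hone hIπ1 hIπ2 r3).1
    have e2 : mulN (oneN n) π2 = π2 := funext fun i => PEquiv.refl_trans _
    rw [e2] at r4
    exact htrans _ _ _ hone hIπ2 (hmul _ _ hIπ1 hIπ2) r3' r4
  · ext i
    simp only [Dset, Set.mem_setOf_eq, oneN]
    constructor
    · intro hne'
      by_contra heq'
      have heq : α i = β i := heq'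
      apply hne'
      have hs1 : Stmt13Aux.Sub (α i) (β i) := by rw [heq]; exact Stmt13Aux.sub_refl _
      have hs2 : Stmt13Aux.Sub (β i) (α i) := by rw [heq]; exact Stmt13Aux.sub_refl _
      have hϖ : mulN π1 π2 i = PEquiv.refl ℤ := by
        show (π1 i).trans (π2 i) = PEquiv.refl ℤ
        rw [show π1 i = PEquiv.refl ℤ from hB i hs1,
          show π2 i = PEquiv.refl ℤ from hB' i hs2, PEquiv.refl_trans]
      exact hϖ.symm
    · intro hne' hcon
      by_cases hs : Stmt13Aux.Sub (α i) (β i)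
      · have hs2 : ¬ Stmt13Aux.Sub (β i) (α i) :=
          fun h => hne' (Stmt13Aux.sub_antisymm hs h)
        obtain ⟨x₀, hx₀⟩ := hC' i hs2
        have hval : mulN π1 π2 i x₀ = some x₀ := by rw [← hcon, PEquiv.refl_apply]
        have hmm : mulN π1 π2 i x₀ = (π2 i) x₀ := by
          show ((π1 i).trans (π2 i)) x₀ = _
          rw [show π1 i = PEquiv.refl ℤ from hB i hs, PEquiv.refl_trans]
        have h2none : (π2 i) x₀ = none := hx₀
        rw [hmm, h2none] at hval
        exact absurd hval (by simp)
      · obtain ⟨x₀, hx₀⟩ := hC i hs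
        have hval : mulN π1 π2 i x₀ = some x₀ := by rw [← hcon, PEquiv.refl_apply]
        have h1none : (π1 i) x₀ = none := hx₀
        have hmm : mulN π1 π2 i x₀ = ((π1 i) x₀).bind (π2 i) := rfl
        rw [hmm, h1none, Option.bind_none] at hval
        exact absurd hval (by simp)
end
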